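/- Let n, k be positive integers with 1 ≤ k < n and p = k/n, and let B be a binomial random variable with parameters n and p. Then E[max(B − k, 0)] = (1−p)·k·P(B = k), i.e. ∑_{j=k+1}^{n} (j−k)·C(n,j)·p^j·(1−p)^{n−j} = (1−p)·k·C(n,k)·p^k·(1−p)^{n−k}. -/

import Mathlib

open Finset

/-- The probability that a binomial random variable with parameters `n`, `p`
takes the value `j`. -/
noncomputable def binomPMF (n : ℕ) (p : ℝ) (j : ℕ) : ℝ :=
  (n.choose j : ℝ) * p ^ j * (1 - p) ^ (n - j)

/-- `j · P_n(j) = n·p · P_{n-1}(j-1)` for `1 ≤ j ≤ n`. -/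
lemma binomPMF_jmul (n j : ℕ) (p : ℝ) (hj1 : 1 ≤ j) (hjn : j ≤ n) :
    (j : ℝ) * binomPMF n p j = (n : ℝ) * p * binomPMF (n - 1) p (j - 1) := by
  have hn1 : 1 ≤ n := le_trans hj1 hjn
  have hchoose : n * (n - 1).choose (j - 1) = n.choose j * j := by
    have h := Nat.add_one_mul_choose_eq (n - 1) (j - 1)
    have e1 : n - 1 + 1 = n := by omega
    have e2 : j - 1 + 1 = j := by omega
    rwa [e1, e2] at h
  have hc : (n : ℝ) * ((n - 1).choose (j - 1) : ℝ) = (n.choose j : ℝ) * (j : ℝ) := by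
    exact_mod_cast congrArg (Nat.cast : ℕ → ℝ) hchoose
  have e2 : (n - 1) - (j - 1) = n - j := by omega
  have hp' : p ^ j = p ^ (j - 1) * p := by
    rw [← pow_succ]
    congr 1
    omega
  unfold binomPMF
  rw [e2, hp']
  linear_combination (-(p ^ (j - 1) * p * (1 - p) ^ (n - j))) * hc

/-- Pascal-type recursion for the binomial pmf. -/
lemma binomPMF_pascal (n j : ℕ) (p : ℝ) (hj1 : 1 ≤ j) (hjn : j ≤ n) :
    binomPMF n p j = p * binomPMF (n - 1) p (j - 1) + (1 - p) * binomPMF (n - 1) p j := by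
  have hn1 : 1 ≤ n := le_trans hj1 hjn
  rcases eq_or_lt_of_le hjn with rfl | hjlt
  · -- j = n
    have h1 : binomPMF j p j = p ^ j := by
      unfold binomPMF; simp
    have h2 : binomPMF (j - 1) p (j - 1) = p ^ (j - 1) := by
      unfold binomPMF; simp
    have h3 : binomPMF (j - 1) p j = 0 := by
      unfold binomPMF
      rw [Nat.choose_eq_zero_of_lt (by omega)]
      simp
    rw [h1, h2, h3, mul_zero, add_zero, ← pow_succ']
    congr 1
    omega
  · -- j < n
    have hchoose : n.choose j = (n - 1).choose (j - 1) + (n - 1).choose j := by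
      have h := Nat.choose_succ_succ (n - 1) (j - 1)
      have e1 : (n - 1).succ = n := by omega
      have e2 : (j - 1).succ = j := by omega
      rwa [e1, e2] at h
    have hc : (n.choose j : ℝ)
        = ((n - 1).choose (j - 1) : ℝ) + ((n - 1).choose j : ℝ) := by
      exact_mod_cast congrArg (Nat.cast : ℕ → ℝ) hchoose
    have e2 : (n - 1) - (j - 1) = n - j := by omega
    have hp' : p ^ j = p ^ (j - 1) * p := by
      rw [← pow_succ]; congr 1; omega
    have hq' : (1 - p) ^ (n - j) = (1 - p) ^ ((n - 1) - j) * (1 - p) := by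
      rw [← pow_succ]; congr 1; omega
    unfold binomPMF
    rw [e2, hp', hq']
    linear_combination (p ^ (j - 1) * p * (1 - p) ^ ((n - 1) - j) * (1 - p)) * hc

theorem expectation_overflow_formula (n k : ℕ) (hk : 1 ≤ k) (hkn : k < n)
    (p : ℝ) (hp : p = (k : ℝ) / (n : ℝ)) :
    ∑ j ∈ Finset.Icc (k + 1) n, ((j : ℝ) - (k : ℝ)) * binomPMF n p j
      = (1 - p) * (k : ℝ) * binomPMF n p k := by
  have hn0 : (n : ℝ) ≠ 0 := Nat.cast_ne_zero.mpr (by omega)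
  have hnp : (n : ℝ) * p = (k : ℝ) := by
    rw [hp]; field_simp
  have h1mp : (n : ℝ) * (1 - p) = (n : ℝ) - (k : ℝ) := by
    linear_combination -hnp
  -- pointwise telescoping identity on the summand
  have hstep : ∀ j, k + 1 ≤ j → j ≤ n →
      ((j : ℝ) - (k : ℝ)) * binomPMF n p j
        = (k : ℝ) * (1 - p) * binomPMF (n - 1) p (j - 1)
          - (k : ℝ) * (1 - p) * binomPMF (n - 1) p j := by
    intro j hj1 hjn
    have hA := binomPMF_jmul n j p (by omega) hjn
    have hB := binomPMF_pascal n j p (by omega) hjn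
    linear_combination hA - (k : ℝ) * hB + binomPMF (n - 1) p (j - 1) * hnp
  rw [← Finset.Ico_add_one_right_eq_Icc, Finset.sum_Ico_eq_sum_range]
  have hrange : n + 1 - (k + 1) = n - k := by omega
  rw [hrange]
  have hcongr : ∀ i ∈ Finset.range (n - k),
      ((↑(k + 1 + i) : ℝ) - (k : ℝ)) * binomPMF n p (k + 1 + i)
        = (fun m => (k : ℝ) * (1 - p) * binomPMF (n - 1) p (k + m)) i
          - (fun m => (k : ℝ) * (1 - p) * binomPMF (n - 1) p (k + m)) (i + 1) := by
    intro i hi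
    have h := hstep (k + 1 + i) (by omega) (by
      simp only [Finset.mem_range] at hi; omega)
    have e1 : k + 1 + i - 1 = k + i := by omega
    have e2 : k + (i + 1) = k + 1 + i := by omega
    simp only [e2]
    rw [h, e1]
  rw [Finset.sum_congr rfl hcongr,
    Finset.sum_range_sub' (fun m => (k : ℝ) * (1 - p) * binomPMF (n - 1) p (k + m))]
  have e3 : k + (n - k) = n := by omega
  have hQn : binomPMF (n - 1) p n = 0 := by
    unfold binomPMF
    rw [Nat.choose_eq_zero_of_lt (by omega)]
    simp
  simp only [Nat.add_zero, e3, hQn, mul_zero, sub_zero]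
  -- final algebra
  have hchoose : (n - 1).choose k * n = n.choose k * (n - k) := by
    have h := Nat.choose_mul_succ_eq (n - 1) k
    have e1 : n - 1 + 1 = n := by omega
    rwa [e1] at h
  have hc : ((n - 1).choose k : ℝ) * (n : ℝ) = (n.choose k : ℝ) * ((n : ℝ) - (k : ℝ)) := by
    have := congrArg (Nat.cast : ℕ → ℝ) hchoose
    push_cast [Nat.cast_sub (le_of_lt hkn)] at this
    exact this
  have hC : ((n - 1).choose k : ℝ) = (1 - p) * (n.choose k : ℝ) := by
    apply mul_right_cancel₀ hn0
    rw [hc]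
    linear_combination (-(n.choose k : ℝ)) * h1mp
  have hq' : (1 - p) ^ (n - k) = (1 - p) ^ ((n - 1) - k) * (1 - p) := by
    rw [← pow_succ]; congr 1; omega
  unfold binomPMF
  rw [hq', hC]
  ring
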